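/- Let T be a collection of subsets of U_n := {0,...,n-1}. A matrix Φ ∈ ℝ^{m×n} satisfies the Generalized Nullspace Property with respect to T if and only if max over S ∈ T of the max over z ∈ Ext(null(Φ) ∩ B₁ⁿ) of ‖z_S‖₁ is strictly less than 1/2, where Ext(C) denotes the set of extreme points of a convex set C. -/
import Mathlib


/-- The ℓ₁ norm of a vector in ℝⁿ. -/
noncomputable def l1 {n : ℕ} (x : Fin n → ℝ) : ℝ := ∑ i, |x i|

/-- The ℓ₁ norm of the restriction of a vector to an index set `S`. -/
noncomputable def l1S {n : ℕ} (S : Finset (Fin n)) (x : Fin n → ℝ) : ℝ := ∑ i ∈ S, |x i|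

lemma l1S_nonneg {n : ℕ} (S : Finset (Fin n)) (x : Fin n → ℝ) : 0 ≤ l1S S x :=
  Finset.sum_nonneg fun _ _ => abs_nonneg _

lemma l1_split {n : ℕ} (S : Finset (Fin n)) (x : Fin n → ℝ) :
    l1 x = l1S S x + l1S Sᶜ x :=
  (Finset.sum_add_sum_compl S _).symm

lemma l1S_le_l1 {n : ℕ} (S : Finset (Fin n)) (x : Fin n → ℝ) : l1S S x ≤ l1 x :=
  Finset.sum_le_sum_of_subset_of_nonneg (Finset.subset_univ S) fun _ _ _ => abs_nonneg _

lemma l1S_smul {n : ℕ} (S : Finset (Fin n)) (c : ℝ) (x : Fin n → ℝ) :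
    l1S S (c • x) = |c| * l1S S x := by
  simp [l1S, Finset.mul_sum, abs_mul]

lemma l1_smul {n : ℕ} (c : ℝ) (x : Fin n → ℝ) : l1 (c • x) = |c| * l1 x := by
  simp [l1, Finset.mul_sum, abs_mul]

lemma l1_pos {n : ℕ} {x : Fin n → ℝ} (hx : x ≠ 0) : 0 < l1 x := by
  obtain ⟨i, hi⟩ := Function.ne_iff.1 hx
  exact lt_of_lt_of_le (abs_pos.2 hi)
    (Finset.single_le_sum (fun j _ => abs_nonneg (x j)) (Finset.mem_univ i))

lemma continuous_l1S {n : ℕ} (S : Finset (Fin n)) : Continuous (l1S S) :=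
  continuous_finset_sum _ fun i _ => (continuous_apply i).abs

lemma continuous_l1 {n : ℕ} : Continuous (l1 (n := n)) :=
  continuous_finset_sum _ fun i _ => (continuous_apply i).abs

lemma convexOn_l1S {n : ℕ} (S : Finset (Fin n)) : ConvexOn ℝ Set.univ (l1S S) := by
  refine ⟨convex_univ, fun x _ y _ a b ha hb _ => ?_⟩
  simp only [l1S, smul_eq_mul, Pi.add_apply, Pi.smul_apply]
  calc ∑ i ∈ S, |a * x i + b * y i| ≤ ∑ i ∈ S, (a * |x i| + b * |y i|) := by
        refine Finset.sum_le_sum fun i _ => ?_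
        calc |a * x i + b * y i| ≤ |a * x i| + |b * y i| := abs_add_le _ _
          _ = a * |x i| + b * |y i| := by
              rw [abs_mul, abs_mul, abs_of_nonneg ha, abs_of_nonneg hb]
    _ = a * ∑ i ∈ S, |x i| + b * ∑ i ∈ S, |y i| := by
        rw [Finset.sum_add_distrib, Finset.mul_sum, Finset.mul_sum]

/-- A matrix `Φ ∈ ℝ^{m×n}` satisfies the Generalized Nullspace Property w.r.t. a collection
`T` of subsets of `U_n` iff the max over `S ∈ T` and over extreme points `z` of
`null(Φ) ∩ B₁ⁿ` of `‖z_S‖₁` is strictly less than `1/2`. -/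
theorem stmt3 {m n : ℕ} (Φ : Matrix (Fin m) (Fin n) ℝ) (T : Set (Finset (Fin n))) :
    (∀ η : Fin n → ℝ, Φ.mulVec η = 0 → η ≠ 0 → ∀ S ∈ T, l1S S η < l1S Sᶜ η)
      ↔ sSup {r : ℝ | ∃ S ∈ T,
          ∃ z ∈ Set.extremePoints ℝ ({η : Fin n → ℝ | Φ.mulVec η = 0} ∩ {x | l1 x ≤ 1}),
            r = l1S S z} < 1 / 2 := by
  classical
  set K : Set (Fin n → ℝ) := {η | Φ.mulVec η = 0} ∩ {x | l1 x ≤ 1} with hKdef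
  set R : Set ℝ := {r | ∃ S ∈ T, ∃ z ∈ Set.extremePoints ℝ K, r = l1S S z} with hRdef
  have h0K : (0 : Fin n → ℝ) ∈ K := by
    constructor
    · simp [Set.mem_setOf_eq, Matrix.mulVec_zero]
    · simp [Set.mem_setOf_eq, l1]
  have hmv : Continuous Φ.mulVec := by
    have h := LinearMap.continuous_of_finiteDimensional Φ.mulVecLin
    have he : ⇑Φ.mulVecLin = Φ.mulVec := by
      funext x; exact Matrix.mulVecLin_apply Φ x
    rwa [he] at h
  have hKcl : IsClosed K := by
    refine IsClosed.inter ?_ (isClosed_le continuous_l1 continuous_const)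
    exact isClosed_eq hmv continuous_const
  have hKcomp : IsCompact K := by
    refine (isCompact_closedBall (0 : Fin n → ℝ) 1).of_isClosed_subset hKcl ?_
    intro x hx
    rw [mem_closedBall_zero_iff]
    rw [pi_norm_le_iff_of_nonneg zero_le_one]
    intro i
    rw [Real.norm_eq_abs]
    calc |x i| ≤ l1 x :=
          Finset.single_le_sum (fun j _ => abs_nonneg (x j)) (Finset.mem_univ i)
      _ ≤ 1 := hx.2
  have hKconv : Convex ℝ K := by
    refine Convex.inter ?_ ?_
    · intro x hx y hy a b _ _ _
      simp only [Set.mem_setOf_eq] at hx hy ⊢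
      rw [Matrix.mulVec_add, Matrix.mulVec_smul, Matrix.mulVec_smul, hx, hy,
        smul_zero, smul_zero, add_zero]
    · have h := (convexOn_l1S (Finset.univ : Finset (Fin n))).convex_le 1
      simpa [Set.sep_univ, l1, l1S] using h
  constructor
  · intro hGNUP
    have hmax : ∀ S : Finset (Fin n), ∃ z ∈ K, IsMaxOn (l1S S) K z := fun S =>
      hKcomp.exists_isMaxOn ⟨0, h0K⟩ (continuous_l1S S).continuousOn
    choose zm hzmK hzm using hmax
    have hlt : ∀ S ∈ T, l1S S (zm S) < 1 / 2 := by
      intro S hS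
      by_cases hz : zm S = 0
      · rw [hz]; simp [l1S]
      · have h1 := hGNUP (zm S) (hzmK S).1 hz S hS
        have h2 : l1 (zm S) ≤ 1 := (hzmK S).2
        have h3 := l1_split S (zm S)
        linarith
    rcases T.eq_empty_or_nonempty with hT | hT
    · have hRe : R = ∅ := by
        rw [hRdef]; ext r; simp [hT]
      rw [hRe, Real.sSup_empty]; norm_num
    · obtain ⟨S₀, hS₀⟩ := hT
      have hTfin : T.Finite := Set.toFinite T
      have hTf : hTfin.toFinset.Nonempty := ⟨S₀, hTfin.mem_toFinset.2 hS₀⟩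
      set c := hTfin.toFinset.sup' hTf (fun S => l1S S (zm S)) with hc
      have hclt : c < 1 / 2 := by
        obtain ⟨S₁, hS₁, hEq⟩ := Finset.exists_mem_eq_sup' hTf (fun S => l1S S (zm S))
        rw [hc, hEq]
        exact hlt S₁ (hTfin.mem_toFinset.1 hS₁)
      have hc0 : 0 ≤ c := by
        refine le_trans (l1S_nonneg S₀ (zm S₀)) ?_
        exact Finset.le_sup' (fun S => l1S S (zm S)) (hTfin.mem_toFinset.2 hS₀)
      refine lt_of_le_of_lt (Real.sSup_le ?_ hc0) hclt
      rintro r ⟨S, hS, z, hzext, rfl⟩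
      have hzK : z ∈ K := extremePoints_subset hzext
      calc l1S S z ≤ l1S S (zm S) := hzm S hzK
        _ ≤ c := Finset.le_sup' (fun S => l1S S (zm S)) (hTfin.mem_toFinset.2 hS)
  · intro hsup η hnull hne S hS
    have hbdd : ∀ r ∈ R, r ≤ 1 := by
      rintro r ⟨S', _, z, hz, rfl⟩
      exact (l1S_le_l1 S' z).trans (extremePoints_subset hz).2
    have key : ∀ x ∈ K, l1S S x ≤ sSup R := by
      intro x hx
      have hKM := closure_convexHull_extremePoints hKcomp hKconv
      have hCconv : Convex ℝ {y : Fin n → ℝ | l1S S y ≤ sSup R} := by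
        have h := (convexOn_l1S S).convex_le (sSup R)
        simpa [Set.sep_univ] using h
      have hCclosed : IsClosed {y : Fin n → ℝ | l1S S y ≤ sSup R} :=
        isClosed_le (continuous_l1S S) continuous_const
      have hsub : Set.extremePoints ℝ K ⊆ {y : Fin n → ℝ | l1S S y ≤ sSup R} := by
        intro z hz
        exact le_csSup ⟨1, fun r hr => hbdd r hr⟩ ⟨S, hS, z, hz, rfl⟩
      have hsub2 : K ⊆ {y : Fin n → ℝ | l1S S y ≤ sSup R} := by
        rw [← hKM]
        exact closure_minimal (convexHull_min hsub hCconv) hCclosed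
      exact hsub2 hx
    have hpos : 0 < l1 η := l1_pos hne
    set z : Fin n → ℝ := (l1 η)⁻¹ • η with hz
    have hzK : z ∈ K := by
      constructor
      · show Φ.mulVec z = 0
        rw [hz, Matrix.mulVec_smul, hnull, smul_zero]
      · show l1 z ≤ 1
        rw [hz, l1_smul, abs_of_pos (inv_pos.2 hpos), inv_mul_cancel₀ hpos.ne']
    have hkey := (key z hzK).trans_lt hsup
    rw [hz, l1S_smul, abs_of_pos (inv_pos.2 hpos)] at hkey
    have h2 : l1S S η < l1 η * (1 / 2) := by
      have h := mul_lt_mul_of_pos_left hkey hpos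
      rwa [← mul_assoc, mul_inv_cancel₀ hpos.ne', one_mul] at h
    have h3 := l1_split S η
    linarith
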